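/- For σ ∈ S_n and τ ∈ S_m (n, m ≥ 1), d(σ ⊗ τ) ≤ m - 1 + d(σ), where d(π) is the maximum over all intervals I and all initial intervals J of D_J(π(I)). -/

import Mathlib

/-- The product `σ ⊗ τ` of `σ ∈ S_n` and `τ ∈ S_m`, as a function on `{0,...,nm-1}`. -/
def otimes (n m : ℕ) (σ τ : ℕ → ℕ) : ℕ → ℕ :=
  fun x => τ (x / n) + m * σ (x % n)

/-- Discrepancy `D_T(S) = | |S ∩ T| - |S||T|/N |` for finite sets of residues mod `N`. -/
noncomputable def disc (N : ℕ) (S T : Finset ℕ) : ℝ :=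
  |((S ∩ T).card : ℝ) - (S.card : ℝ) * (T.card : ℝ) / N|

/-- The (cyclic) interval of `Z_N` starting at `a` of length `len`, as a set of
representatives in `{0,...,N-1}`. -/
def cycInt (N a len : ℕ) : Finset ℕ :=
  (Finset.range len).image (fun i => (a + i) % N)

/-- `d(π)`: the maximum of `D_J(π(I))` over all intervals `I` and initial intervals `J`. -/
noncomputable def dInit (N : ℕ) (π : ℕ → ℕ) : ℝ :=
  sSup {x : ℝ | ∃ a len k, len ≤ N ∧ k ≤ N ∧
    x = disc N ((cycInt N a len).image π) (Finset.range k)}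

open Finset

lemma cycInt' (N a len : ℕ) : (Finset.range len).image (fun i => (a + i) % N) =
  (Finset.range len).image (fun i => (a + i) % N) := rfl

lemma cycInt_injOn (N a len : ℕ) (h : len ≤ N) :
    Set.InjOn (fun i => (a + i) % N) ↑(Finset.range len) := by
  intro i hi j hj hij
  simp only [coe_range, Set.mem_Iio] at hi hj
  have h1 : a + i ≡ a + j [MOD N] := hij
  have h2 : i ≡ j [MOD N] := Nat.ModEq.add_left_cancel' a h1
  have h3 : i % N = j % N := h2
  rw [Nat.mod_eq_of_lt (lt_of_lt_of_le hi h), Nat.mod_eq_of_lt (lt_of_lt_of_le hj h)] at h3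
  exact h3

lemma card_filter_image (s : Finset ℕ) (g : ℕ → ℕ) (hg : Set.InjOn g ↑s)
    (p : ℕ → Prop) [DecidablePred p] :
    ((s.image g).filter p).card = (s.filter (fun x => p (g x))).card := by
  rw [Finset.filter_image]
  exact Finset.card_image_of_injOn (hg.mono (by exact_mod_cast Finset.filter_subset _ s))

lemma inter_range_eq (S : Finset ℕ) (k : ℕ) : S ∩ Finset.range k = S.filter (fun x => x < k) := by
  ext x; simp [Finset.mem_filter, Finset.mem_inter, Finset.mem_range, and_comm]

lemma count_range_add (A B : ℕ) (p : ℕ → Prop) [DecidablePred p] :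
    ((range (A + B)).filter p).card
      = ((range A).filter p).card + ((range B).filter (fun i => p (A + i))).card := by
  induction B with
  | zero => simp
  | succ b ih =>
    have h : A + (b + 1) = (A + b) + 1 := by omega
    rw [h, Finset.range_add_one, Finset.range_add_one, Finset.filter_insert, Finset.filter_insert]
    by_cases hp : p (A + b)
    · rw [if_pos hp, if_pos hp, Finset.card_insert_of_notMem (by simp),
        Finset.card_insert_of_notMem (by simp), ih]
      omega
    · rw [if_neg hp, if_neg hp, ih]

lemma count_periodic (n s : ℕ) (p : ℕ → Prop) [DecidablePred p]
    (hp : ∀ i, p (n + i) ↔ p i) :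
    ((range (n * s)).filter p).card = s * ((range n).filter p).card := by
  have hpb : ∀ b i, p (n * b + i) ↔ p i := by
    intro b
    induction b with
    | zero => simp
    | succ c ihc =>
      intro i
      have h : n * (c + 1) + i = n + (n * c + i) := by ring
      rw [h, hp, ihc]
  induction s with
  | zero => simp
  | succ b ih =>
    have h : n * (b + 1) = n * b + n := by ring
    rw [h, count_range_add, ih]
    have h2 : ((range n).filter (fun i => p (n * b + i))).card = ((range n).filter p).card := by
      congr 1
      exact Finset.filter_congr (fun x _ => by rw [hpb])
    rw [h2]; ring

lemma count_one_block (n a q : ℕ) (σ : ℕ → ℕ) (hσ : Set.BijOn σ (Set.Iio n) (Set.Iio n))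
    (hq : q ≤ n) :
    ((range n).filter (fun i => σ ((a + i) % n) < q)).card = q := by
  rcases Nat.eq_zero_or_pos n with rfl | hn
  · simp; omega
  have hinj : Set.InjOn (fun i => (a + i) % n) ↑(range n) := cycInt_injOn n a n le_rfl
  have himg : (range n).image (fun i => (a + i) % n) = range n := by
    apply Finset.eq_of_subset_of_card_le
    · intro x hx
      simp only [Finset.mem_image, Finset.mem_range] at hx ⊢
      obtain ⟨i, _, rfl⟩ := hx
      exact Nat.mod_lt _ hn
    · rw [Finset.card_image_of_injOn hinj]
  have h1 : ((range n).filter (fun i => σ ((a + i) % n) < q)).card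
      = ((range n).filter (fun c => σ c < q)).card := by
    rw [← card_filter_image (range n) _ hinj (fun c => σ c < q), himg]
  have hbij : ((range n).filter (fun c => σ c < q)).card = (range q).card := by
    apply Finset.card_nbij σ
    · intro x hx
      simp only [Finset.mem_coe, Finset.mem_filter, Finset.mem_range] at hx ⊢
      exact hx.2
    · apply hσ.injOn.mono
      intro x hx
      simp only [Finset.coe_filter, Set.mem_setOf_eq, Finset.mem_range] at hx
      exact hx.1
    · intro y hy
      simp only [Finset.coe_range, Set.mem_Iio] at hy
      obtain ⟨c, hc, rfl⟩ := hσ.surjOn (Set.mem_Iio.2 (lt_of_lt_of_le hy hq))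
      exact ⟨c, by simpa [Finset.mem_coe, Finset.mem_filter, Finset.mem_range] using ⟨hc, hy⟩, rfl⟩
  rw [h1, hbij, Finset.card_range]

lemma otimes_injOn (n m : ℕ) (hn : 0 < n) (hm : 0 < m) (σ τ : ℕ → ℕ)
    (hσ : Set.BijOn σ (Set.Iio n) (Set.Iio n))
    (hτ : Set.BijOn τ (Set.Iio m) (Set.Iio m)) :
    Set.InjOn (otimes n m σ τ) (Set.Iio (n * m)) := by
  intro x hx y hy hxy
  simp only [Set.mem_Iio] at hx hy
  have hxm : x % n < n := Nat.mod_lt _ hn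
  have hym : y % n < n := Nat.mod_lt _ hn
  have hxd : x / n < m := Nat.div_lt_of_lt_mul (by omega)
  have hyd : y / n < m := Nat.div_lt_of_lt_mul (by omega)
  have hτx : τ (x / n) < m := hτ.mapsTo hxd
  have hτy : τ (y / n) < m := hτ.mapsTo hyd
  have h1 : τ (x / n) + m * σ (x % n) = τ (y / n) + m * σ (y % n) := hxy
  have h2 : τ (x / n) = τ (y / n) := by
    have := congrArg (· % m) h1
    simpa [Nat.add_mul_mod_self_left, Nat.mod_eq_of_lt hτx, Nat.mod_eq_of_lt hτy] using this
  have h3 : σ (x % n) = σ (y % n) := by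
    have h4 : m * σ (x % n) = m * σ (y % n) := by omega
    exact Nat.eq_of_mul_eq_mul_left hm h4
  have h5 : x / n = y / n := hτ.injOn (Set.mem_Iio.2 hxd) (Set.mem_Iio.2 hyd) h2
  have h6 : x % n = y % n := hσ.injOn (Set.mem_Iio.2 hxm) (Set.mem_Iio.2 hym) h3
  calc x = n * (x / n) + x % n := (Nat.div_add_mod x n).symm
    _ = n * (y / n) + y % n := by rw [h5, h6]
    _ = y := Nat.div_add_mod y n

theorem dInit_otimes (n m : ℕ) (hn : 0 < n) (hm : 0 < m) (σ τ : ℕ → ℕ)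
    (hσ : Set.BijOn σ (Set.Iio n) (Set.Iio n))
    (hτ : Set.BijOn τ (Set.Iio m) (Set.Iio m)) :
    dInit (n * m) (otimes n m σ τ) ≤ (m : ℝ) - 1 + dInit n σ := by
  have hN : 0 < n * m := Nat.mul_pos hn hm
  have hn' : (0:ℝ) < n := by exact_mod_cast hn
  have hm' : (0:ℝ) < m := by exact_mod_cast hm
  -- boundedness of the σ-set
  have hbdd : BddAbove {x : ℝ | ∃ a len k, len ≤ n ∧ k ≤ n ∧
      x = disc n ((cycInt n a len).image σ) (Finset.range k)} := by
    refine ⟨2 * n, ?_⟩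
    rintro x ⟨a, len, k, hlen, hk, rfl⟩
    have h1 : ((((cycInt n a len).image σ) ∩ range k).card : ℝ) ≤ n := by
      have h := Finset.card_le_card
        (Finset.inter_subset_right : (cycInt n a len).image σ ∩ range k ⊆ range k)
      rw [Finset.card_range] at h
      exact_mod_cast le_trans h hk
    have h2 : (((cycInt n a len).image σ).card : ℝ) ≤ n := by
      have : ((cycInt n a len).image σ).card ≤ n := by
        calc ((cycInt n a len).image σ).card ≤ (cycInt n a len).card := Finset.card_image_le
          _ ≤ (range len).card := by rw [cycInt]; exact Finset.card_image_le
          _ = len := Finset.card_range len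
          _ ≤ n := hlen
      exact_mod_cast this
    have h3 : ((range k).card : ℝ) ≤ n := by
      rw [Finset.card_range]; exact_mod_cast hk
    have h4 : (((cycInt n a len).image σ).card : ℝ) * ((range k).card) / n ≤ n := by
      rw [div_le_iff₀ hn']
      have h5 : (0:ℝ) ≤ ((range k).card : ℝ) := by positivity
      nlinarith
    have h6 : (0:ℝ) ≤ (((cycInt n a len).image σ).card : ℝ) * ((range k).card) / n := by
      positivity
    have h7 : (0:ℝ) ≤ ((((cycInt n a len).image σ) ∩ range k).card : ℝ) := by positivity
    rw [disc, abs_le]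
    constructor <;> linarith
  have hzero : (0:ℝ) ∈ {x : ℝ | ∃ a len k, len ≤ n ∧ k ≤ n ∧
      x = disc n ((cycInt n a len).image σ) (Finset.range k)} := by
    refine ⟨0, 0, 0, Nat.zero_le n, Nat.zero_le n, ?_⟩
    simp [disc, cycInt]
  have hd0 : 0 ≤ dInit n σ := le_csSup hbdd hzero
  have hm1 : (1:ℝ) ≤ m := by exact_mod_cast hm
  rw [dInit]
  apply Real.sSup_le _ (by linarith)
  rintro x ⟨a, len, k, hlen, hk, rfl⟩
  set π := otimes n m σ τ with hπ
  set I : Finset ℕ := cycInt (n * m) a len with hI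
  have hIsub : ∀ x ∈ I, x < n * m := by
    intro x hx
    simp only [hI, cycInt, Finset.mem_image, Finset.mem_range] at hx
    obtain ⟨i, _, rfl⟩ := hx
    exact Nat.mod_lt _ hN
  have hπinj : Set.InjOn π ↑I := by
    apply (otimes_injOn n m hn hm σ τ hσ hτ).mono
    intro x hx
    exact Set.mem_Iio.2 (hIsub x hx)
  obtain ⟨u, t, hlen_eq, ht⟩ : ∃ u t, len = n * u + t ∧ t < n :=
    ⟨len / n, len % n, (Nat.div_add_mod len n).symm, Nat.mod_lt _ hn⟩
  obtain ⟨q, r, hk_eq, hr, hqn⟩ : ∃ q r, k = m * q + r ∧ r < m ∧ q ≤ n := by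
    refine ⟨k / m, k % m, (Nat.div_add_mod k m).symm, Nat.mod_lt _ hm, ?_⟩
    calc k / m ≤ (n * m) / m := Nat.div_le_div_right hk
      _ = n := Nat.mul_div_cancel n hm
  have hcount : ((I.image π) ∩ range k).card = (I.filter (fun x => π x < k)).card := by
    rw [inter_range_eq, card_filter_image I π hπinj]
  have hiff : ∀ x ∈ I, (π x < k ↔ (σ (x % n) < q ∨ (σ (x % n) = q ∧ τ (x / n) < r))) := by
    intro x hx
    have hx' : x < n * m := hIsub x hx
    have hτx : τ (x / n) < m := hτ.mapsTo (Set.mem_Iio.2 (Nat.div_lt_of_lt_mul (by omega)))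
    show τ (x / n) + m * σ (x % n) < k ↔ _
    rw [hk_eq]
    constructor
    · intro h
      rcases Nat.lt_trichotomy (σ (x % n)) q with hB | hB | hB
      · exact Or.inl hB
      · refine Or.inr ⟨hB, ?_⟩
        rw [hB] at h
        omega
      · exfalso
        have h2 : m * q + m ≤ m * σ (x % n) := by
          have h4 := Nat.mul_le_mul_left m hB
          linarith
        omega
    · rintro (hB | ⟨hB, hA⟩)
      · have h2 : m * σ (x % n) + m ≤ m * q := by
          have h4 := Nat.mul_le_mul_left m hB
          linarith
        omega
      · rw [hB]
        omega
  have hsplit : (I.filter (fun x => π x < k)).card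
      = (I.filter (fun x => σ (x % n) < q)).card
        + (I.filter (fun x => σ (x % n) = q ∧ τ (x / n) < r)).card := by
    rw [Finset.filter_congr hiff, Finset.filter_or]
    apply Finset.card_union_of_disjoint
    rw [Finset.disjoint_left]
    intro x h1 h2
    simp only [Finset.mem_filter] at h1 h2
    omega
  have hper : ∀ i, σ ((a + (n + i)) % n) < q ↔ σ ((a + i) % n) < q := by
    intro i
    rw [show a + (n + i) = (a + i) + n by ring, Nat.add_mod_right]
  have hc1 : (I.filter (fun x => σ (x % n) < q)).card
      = u * q + ((range t).filter (fun i => σ ((a + i) % n) < q)).card := by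
    have e1 : (I.filter (fun x => σ (x % n) < q)).card
        = ((range len).filter (fun i => σ ((a + i) % n) < q)).card := by
      rw [hI, cycInt, card_filter_image _ _ (cycInt_injOn (n * m) a len hlen)]
      congr 1
      apply Finset.filter_congr
      intro i _
      rw [Nat.mod_mod_of_dvd _ ⟨m, rfl⟩]
    rw [e1, hlen_eq, count_range_add, count_periodic n u _ hper,
      count_one_block n a q σ hσ hqn]
    congr 1
    congr 1
    apply Finset.filter_congr
    intro i _
    rw [show a + (n * u + i) = (a + i) + u * n by ring, Nat.add_mul_mod_self_right]
  have hsub' : ↑(cycInt n a t) ⊆ Set.Iio n := by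
    intro x hx
    simp only [cycInt, Finset.coe_image, Finset.coe_range] at hx
    obtain ⟨i, _, rfl⟩ := hx
    exact Set.mem_Iio.2 (Nat.mod_lt _ hn)
  have hAint : (((cycInt n a t).image σ) ∩ range q).card
      = ((range t).filter (fun i => σ ((a + i) % n) < q)).card := by
    rw [inter_range_eq, card_filter_image _ σ (hσ.injOn.mono hsub'), cycInt,
      card_filter_image _ _ (cycInt_injOn n a t ht.le)]
  have hIcard : I.card = len := by
    rw [hI, cycInt, Finset.card_image_of_injOn (cycInt_injOn _ _ _ hlen), Finset.card_range]
  have hPcard : (I.image π).card = len := by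
    rw [Finset.card_image_of_injOn hπinj, hIcard]
  have hI'card : ((cycInt n a t).image σ).card = t := by
    rw [Finset.card_image_of_injOn (hσ.injOn.mono hsub')]
    rw [cycInt, Finset.card_image_of_injOn (cycInt_injOn n a t ht.le), Finset.card_range]
  have hEle : (I.filter (fun x => σ (x % n) = q ∧ τ (x / n) < r)).card ≤ r := by
    calc (I.filter (fun x => σ (x % n) = q ∧ τ (x / n) < r)).card ≤ (range r).card := by
          apply Finset.card_le_card_of_injOn (fun x => τ (x / n))
          · intro x hx
            simp only [Finset.mem_coe, Finset.mem_filter] at hx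
            exact Finset.mem_range.2 hx.2.2
          · intro x hx y hy hxy
            simp only [Finset.coe_filter, Set.mem_setOf_eq] at hx hy
            have hx' : x < n * m := hIsub x hx.1
            have hy' : y < n * m := hIsub y hy.1
            have h5 : x / n = y / n := hτ.injOn
              (Set.mem_Iio.2 (Nat.div_lt_of_lt_mul (by omega)))
              (Set.mem_Iio.2 (Nat.div_lt_of_lt_mul (by omega))) hxy
            have h3 : σ (x % n) = σ (y % n) := by rw [hx.2.1, hy.2.1]
            have h6 : x % n = y % n := hσ.injOn
              (Set.mem_Iio.2 (Nat.mod_lt _ hn)) (Set.mem_Iio.2 (Nat.mod_lt _ hn)) h3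
            calc x = n * (x / n) + x % n := (Nat.div_add_mod x n).symm
              _ = n * (y / n) + y % n := by rw [h5, h6]
              _ = y := Nat.div_add_mod y n
      _ = r := Finset.card_range r
  -- the real-number estimate
  have hlenR : (len : ℝ) = n * u + t := by exact_mod_cast congrArg (Nat.cast (R := ℝ)) hlen_eq
  have hkR : (k : ℝ) = m * q + r := by exact_mod_cast congrArg (Nat.cast (R := ℝ)) hk_eq
  have hXmem : disc n ((cycInt n a t).image σ) (range q) ≤ dInit n σ :=
    le_csSup hbdd ⟨a, t, q, ht.le, hqn, rfl⟩
  have hXval : disc n ((cycInt n a t).image σ) (range q)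
      = |(((range t).filter (fun i => σ ((a + i) % n) < q)).card : ℝ) - (t : ℝ) * q / n| := by
    rw [disc, hI'card, Finset.card_range, hAint]
  rw [disc, hPcard, Finset.card_range, hcount, hsplit, hc1]
  have keyeq : ((u * q + ((range t).filter (fun i => σ ((a + i) % n) < q)).card
        + (I.filter (fun x => σ (x % n) = q ∧ τ (x / n) < r)).card : ℕ) : ℝ)
        - (len : ℝ) * (k : ℝ) / ((n * m : ℕ) : ℝ)
      = ((((range t).filter (fun i => σ ((a + i) % n) < q)).card : ℝ) - (t : ℝ) * q / n)
        + (((I.filter (fun x => σ (x % n) = q ∧ τ (x / n) < r)).card : ℝ)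
            - (len : ℝ) * r / ((n : ℝ) * m)) := by
    push_cast
    rw [hlenR, hkR]
    field_simp
    ring
  rw [keyeq]
  have hY : |((I.filter (fun x => σ (x % n) = q ∧ τ (x / n) < r)).card : ℝ)
      - (len : ℝ) * r / ((n : ℝ) * m)| ≤ (m : ℝ) - 1 := by
    have hEr : ((I.filter (fun x => σ (x % n) = q ∧ τ (x / n) < r)).card : ℝ) ≤ r := by
      exact_mod_cast hEle
    have hE0 : (0:ℝ) ≤ ((I.filter (fun x => σ (x % n) = q ∧ τ (x / n) < r)).card : ℝ) := by
      positivity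
    have hlr : (len : ℝ) * r / ((n : ℝ) * m) ≤ r := by
      rw [div_le_iff₀ (by positivity)]
      have hlnm : (len : ℝ) ≤ (n : ℝ) * m := by exact_mod_cast hlen
      have hr0 : (0:ℝ) ≤ r := by positivity
      nlinarith
    have hlr0 : (0:ℝ) ≤ (len : ℝ) * r / ((n : ℝ) * m) := by positivity
    have hrm : (r : ℝ) ≤ (m : ℝ) - 1 := by
      have : (r : ℝ) + 1 ≤ m := by exact_mod_cast hr
      linarith
    rw [abs_le]
    constructor <;> linarith
  calc |_ + _| ≤ _ := abs_add_le _ _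
    _ ≤ dInit n σ + ((m : ℝ) - 1) := add_le_add (hXval ▸ hXmem) hY
    _ = (m : ℝ) - 1 + dInit n σ := by ring
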